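/- arXiv:2201.09453 — 2 statements merged into one kernel-verified Lean document; each statement's English description precedes it below -/
import Mathlib

section
/- (Corollary 3.4) Let L ≥ 1 and let (a_j, b_j, T_j), j = 1, …, L, be a 4-chained family of parameter triples, write G_j = G_{a_j,b_j,T_j}, and let σ_j ∈ {−1, +1}, j = 1, …, L, be arbitrary signs. Then for every integer K ≥ 1 there exist an integer m ≥ K and real numbers α < β with [α, β] ⊆ [s_{m−1}(b_L,T_L), s_m(b_L,T_L)] such that for every j ∈ {1, …, L} and every χ ∈ [α, β]: σ_j·G_j(χ) ≤ −(1/2)·a_L·T_L·b_L^{m−1} < 0. -/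
open Real Filter Set

/-- Breakpoints `s_n(b,T) = T·π·(b^n − 1)/(b − 1)`. -/
noncomputable def brk (b T : ℝ) (n : ℕ) : ℝ := T * Real.pi * (b ^ n - 1) / (b - 1)

/-- Index of the segment containing `x ≥ 0`: the unique `m` with `s_m ≤ x < s_{m+1}`
(for `b > 1`, `T > 0`). -/
noncomputable def seg (b T x : ℝ) : ℕ := sInf {n : ℕ | x < brk b T (n + 1)}

/-- The saturated Nussbaum function `N_{a,b,T}`: on `[s_{n−1}, s_n)` (with `m = n − 1`)
it equals `(−1)^m·a·cos((χ − s_m)/(b^m·T))`, extended evenly to `χ < 0`. -/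
noncomputable def satN (a b T : ℝ) (χ : ℝ) : ℝ :=
  (-1 : ℝ) ^ (seg b T |χ|) * a *
    Real.cos ((|χ| - brk b T (seg b T |χ|)) / (b ^ (seg b T |χ|) * T))

/-- The integrated function `G_{a,b,T}(χ) = ∫_0^χ N_{a,b,T}(τ) dτ`. -/
noncomputable def satG (a b T : ℝ) (χ : ℝ) : ℝ := ∫ τ in (0:ℝ)..χ, satN a b T τ

open MeasureTheory intervalIntegral

lemma brk_zero (b T : ℝ) : brk b T 0 = 0 := by simp [brk]

lemma brk_succ_sub {b : ℝ} (hb : 1 < b) (T : ℝ) (n : ℕ) :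
    brk b T (n + 1) - brk b T n = T * Real.pi * b ^ n := by
  have h : b - 1 ≠ 0 := by linarith
  rw [brk, brk, ← sub_div, div_eq_iff h]; ring

lemma brk_strictMono {b T : ℝ} (hb : 1 < b) (hT : 0 < T) : StrictMono (brk b T) := by
  apply strictMono_nat_of_lt_succ
  intro n
  have h1 := brk_succ_sub hb T n
  have h2 : 0 < T * Real.pi * b ^ n := by positivity
  linarith

lemma brk_nonneg {b T : ℝ} (hb : 1 < b) (hT : 0 < T) (n : ℕ) : 0 ≤ brk b T n := by
  have := (brk_strictMono hb hT).monotone (Nat.zero_le n)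
  simpa [brk_zero] using this

lemma exists_brk_gt {b T : ℝ} (hb : 1 < b) (hT : 0 < T) (x : ℝ) :
    ∃ n : ℕ, x < brk b T (n + 1) := by
  obtain ⟨n, hn⟩ := exists_nat_gt (x / (T * Real.pi))
  refine ⟨n, ?_⟩
  have hπ : 0 < T * Real.pi := by positivity
  have hx : x < T * Real.pi * n := by
    rw [div_lt_iff₀ hπ] at hn; linarith [hn]
  have hber : (n : ℝ) * (b - 1) + 1 ≤ b ^ (n + 1) := by
    have h := one_add_mul_le_pow (a := b - 1) (by linarith) (n + 1)
    have hbb : (1 : ℝ) + (b - 1) = b := by ring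
    rw [hbb] at h
    have : (n : ℝ) * (b - 1) ≤ ((n : ℝ) + 1) * (b - 1) := by nlinarith
    push_cast at h ⊢
    nlinarith
  have hb1 : 0 < b - 1 := by linarith
  have : T * Real.pi * n ≤ brk b T (n + 1) := by
    rw [brk, le_div_iff₀ hb1]
    nlinarith
  linarith

lemma seg_eq {b T x : ℝ} (hb : 1 < b) (hT : 0 < T) {n : ℕ}
    (h1 : brk b T n ≤ x) (h2 : x < brk b T (n + 1)) : seg b T x = n := by
  have hmem : n ∈ {k : ℕ | x < brk b T (k + 1)} := h2
  refine le_antisymm (Nat.sInf_le hmem) ?_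
  refine le_csInf ⟨n, hmem⟩ ?_
  intro k hk
  by_contra hlt
  push_neg at hlt
  have : brk b T (k + 1) ≤ brk b T n := (brk_strictMono hb hT).monotone (by omega)
  exact absurd hk (by simp only [Set.mem_setOf_eq]; push_neg; linarith)

lemma satN_eq {a b T x : ℝ} (hb : 1 < b) (hT : 0 < T) {n : ℕ}
    (h1 : brk b T n ≤ x) (h2 : x < brk b T (n + 1)) :
    satN a b T x = (-1 : ℝ) ^ n * a * Real.cos ((x - brk b T n) / (b ^ n * T)) := by
  have hx0 : 0 ≤ x := le_trans (brk_nonneg hb hT n) h1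
  rw [satN, abs_of_nonneg hx0, seg_eq hb hT h1 h2]

lemma satN_eqOn {a b T : ℝ} (hb : 1 < b) (hT : 0 < T) (n : ℕ) :
    Set.EqOn (satN a b T)
      (fun τ => (-1 : ℝ) ^ n * a * Real.cos ((τ - brk b T n) / (b ^ n * T)))
      (Set.Ico (brk b T n) (brk b T (n + 1))) := by
  intro τ hτ
  exact satN_eq hb hT hτ.1 hτ.2

lemma satN_integrable_piece {a b T : ℝ} (hb : 1 < b) (hT : 0 < T) (n : ℕ) {x y : ℝ}
    (hx : brk b T n ≤ x) (hxy : x ≤ y) (hy : y ≤ brk b T (n + 1)) :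
    IntervalIntegrable (satN a b T) volume x y := by
  set g : ℝ → ℝ := fun τ => (-1 : ℝ) ^ n * a * Real.cos ((τ - brk b T n) / (b ^ n * T)) with hg
  have hgc : Continuous g := by
    apply Continuous.mul continuous_const
    exact Real.continuous_cos.comp ((continuous_id.sub continuous_const).div_const _)
  rw [intervalIntegrable_iff_integrableOn_Ioc_of_le hxy]
  have hgi : IntegrableOn g (Set.Ioc x y) := hgc.integrableOn_Ioc
  refine hgi.congr_fun_ae ?_
  have hne : ∀ᵐ τ ∂(volume.restrict (Set.Ioc x y)), τ ≠ brk b T (n + 1) := by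
      refine MeasureTheory.ae_restrict_of_ae ?_
      have : (volume : Measure ℝ) {brk b T (n + 1)} = 0 := measure_singleton _
      exact MeasureTheory.ae_iff.2 (by simpa using this)
  filter_upwards [MeasureTheory.ae_restrict_mem measurableSet_Ioc, hne] with τ hτ hτne
  have h1 : brk b T n ≤ τ := le_trans hx (le_of_lt hτ.1)
  have h2 : τ < brk b T (n + 1) := lt_of_le_of_ne (le_trans hτ.2 hy) hτne
  exact (satN_eq hb hT h1 h2).symm

lemma satN_integral_piece {a b T : ℝ} (hb : 1 < b) (hT : 0 < T) (n : ℕ) {x : ℝ}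
    (hx : brk b T n ≤ x) (hy : x ≤ brk b T (n + 1)) :
    ∫ τ in (brk b T n)..x, satN a b T τ =
      (-1 : ℝ) ^ n * a * (b ^ n * T) * Real.sin ((x - brk b T n) / (b ^ n * T)) := by
  set s := brk b T n with hs
  set c : ℝ := b ^ n * T with hc
  have hcpos : 0 < c := by positivity
  have hcongr : ∫ τ in s..x, satN a b T τ
      = ∫ τ in s..x, (-1 : ℝ) ^ n * a * Real.cos ((τ - s) / c) := by
    refine intervalIntegral.integral_congr_ae ?_
    have hne : ∀ᵐ τ ∂(volume : Measure ℝ), τ ≠ brk b T (n + 1) := by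
      have : (volume : Measure ℝ) {brk b T (n + 1)} = 0 := measure_singleton _
      exact MeasureTheory.ae_iff.2 (by simpa using this)
    filter_upwards [hne] with τ hτne hτ
    rw [Set.uIoc_of_le hx] at hτ
    have h1 : brk b T n ≤ τ := le_of_lt hτ.1
    have h2 : τ < brk b T (n + 1) := lt_of_le_of_ne (le_trans hτ.2 hy) hτne
    exact satN_eq hb hT h1 h2
  rw [hcongr, intervalIntegral.integral_const_mul]
  have h1 : ∫ τ in s..x, Real.cos ((τ - s) / c)
      = ∫ τ in (0:ℝ)..(x - s), Real.cos (τ / c) := by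
    have := intervalIntegral.integral_comp_sub_right (a := s) (b := x)
      (fun τ => Real.cos (τ / c)) s
    simpa using this
  have h2 : ∫ τ in (0:ℝ)..(x - s), Real.cos (τ / c)
      = c * Real.sin ((x - s) / c) := by
    rw [intervalIntegral.integral_comp_div (f := Real.cos) (ne_of_gt hcpos)]
    simp [integral_cos, smul_eq_mul]
  rw [h1, h2]
  ring

lemma satN_integrable_to {a b T : ℝ} (hb : 1 < b) (hT : 0 < T) (n : ℕ) :
    IntervalIntegrable (satN a b T) volume 0 (brk b T n) := by
  induction n with
  | zero => rw [brk_zero]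
  | succ k ih =>
    refine ih.trans (satN_integrable_piece hb hT k le_rfl ?_ le_rfl)
    exact le_of_lt (brk_strictMono hb hT (Nat.lt_succ_self k))

lemma satG_brk {a b T : ℝ} (hb : 1 < b) (hT : 0 < T) (n : ℕ) :
    satG a b T (brk b T n) = 0 := by
  induction n with
  | zero => simp [satG, brk_zero]
  | succ k ih =>
    have hle : brk b T k ≤ brk b T (k + 1) :=
      le_of_lt (brk_strictMono hb hT (Nat.lt_succ_self k))
    have hsplit := intervalIntegral.integral_add_adjacent_intervals
      (satN_integrable_to hb hT k) (satN_integrable_piece (a := a) hb hT k le_rfl hle le_rfl)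
    have hpi : (brk b T (k + 1) - brk b T k) / (b ^ k * T) = Real.pi := by
      rw [brk_succ_sub hb T k]
      field_simp
    have hpiece := satN_integral_piece (a := a) hb hT k hle le_rfl
    rw [hpi] at hpiece
    simp only [Real.sin_pi, mul_zero] at hpiece
    rw [satG, ← hsplit, hpiece, add_zero, ← satG, ih]

lemma satG_formula {a b T : ℝ} (hb : 1 < b) (hT : 0 < T) (n : ℕ) {x : ℝ}
    (h1 : brk b T n ≤ x) (h2 : x ≤ brk b T (n + 1)) :
    satG a b T x =
      (-1 : ℝ) ^ n * a * (b ^ n * T) * Real.sin ((x - brk b T n) / (b ^ n * T)) := by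
  have hsplit := intervalIntegral.integral_add_adjacent_intervals
    (satN_integrable_to (a := a) hb hT n) (satN_integrable_piece (a := a) hb hT n le_rfl h1 h2)
  rw [satG, ← hsplit, ← satG, satG_brk hb hT n, zero_add]
  exact satN_integral_piece hb hT n h1 h2

lemma brk_diff {b : ℝ} (hb : 1 < b) (T : ℝ) (p q : ℕ) :
    brk b T p - brk b T q = T * Real.pi * (b ^ p - b ^ q) / (b - 1) := by
  have h : b - 1 ≠ 0 := by linarith
  rw [brk, brk, ← sub_div]; congr 1; ring

lemma brk_chain {b' T' : ℝ} (hb' : 1 < b') (n : ℕ) :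
    brk (b' ^ 4) ((1 + b' + b' ^ 2 + b' ^ 3) * T') n = brk b' T' (4 * n) := by
  have h1 : b' - 1 ≠ 0 := by linarith
  have h4 : b' ^ 4 - 1 ≠ 0 := by
    have : (1:ℝ) < b' ^ 4 := one_lt_pow₀ hb' (by norm_num)
    linarith
  unfold brk
  rw [pow_mul]
  field_simp
  ring

lemma chain_left_ineq {b' Q X u : ℝ} (hb' : 1 < b') (hQ : 0 < Q) (hX : Q ≤ X)
    (hu : 0 < u) (o : ℕ) (ho : o = 1 ∨ o = 2) (hub : 4 * Q ≤ u * b' ^ o) :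
    Q ≤ b' ^ 3 / (1 + b' + b' ^ 2 + b' ^ 3) * (X + u * (b' ^ o - 1) / (b' - 1)) := by
  have hb1 : (0:ℝ) < b' - 1 := by linarith
  have hb0 : (0:ℝ) < b' := by linarith
  have hS : (0:ℝ) < 1 + b' + b' ^ 2 + b' ^ 3 := by positivity
  have hsq : (0:ℝ) < b' ^ 2 - 1 := by nlinarith [mul_pos hb1 (show (0:ℝ) < b' + 1 by linarith)]
  have hbb : (0:ℝ) < b' * (b' - 1) := mul_pos hb0 hb1
  have hrw : b' ^ 3 / (1 + b' + b' ^ 2 + b' ^ 3) * (X + u * (b' ^ o - 1) / (b' - 1))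
      = b' ^ 3 * (X * (b' - 1) + u * (b' ^ o - 1)) / ((1 + b' + b' ^ 2 + b' ^ 3) * (b' - 1)) := by
    field_simp
    try ring
  rw [hrw, le_div_iff₀ (by positivity)]
  have t1 : Q * (b' ^ 3 * (b' - 1)) ≤ X * (b' ^ 3 * (b' - 1)) :=
    mul_le_mul_of_nonneg_right hX (by positivity)
  rcases ho with rfl | rfl
  · have t2 : 4 * Q * (b' ^ 2 * (b' - 1)) ≤ u * b' ^ 1 * (b' ^ 2 * (b' - 1)) :=
      mul_le_mul_of_nonneg_right hub (by positivity)
    have key : (0:ℝ) ≤ (b' - 1) * (3 * b' ^ 2 - b' - 1) :=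
      mul_nonneg hb1.le (by nlinarith [hbb])
    have t3 := mul_le_mul_of_nonneg_left key hQ.le
    nlinarith [t1, t2, t3]
  · have t2 : 4 * Q * (b' * (b' ^ 2 - 1)) ≤ u * b' ^ 2 * (b' * (b' ^ 2 - 1)) :=
      mul_le_mul_of_nonneg_right hub (by positivity)
    have key : (0:ℝ) ≤ (b' - 1) * (3 * b' ^ 2 + 3 * b' - 1) :=
      mul_nonneg hb1.le (by nlinarith)
    have t3 := mul_le_mul_of_nonneg_left key hQ.le
    nlinarith [t1, t2, t3]

lemma chain_right_ineq {b' Q X u : ℝ} (hb' : 1 < b') (hQ : 0 < Q) (hX : Q ≤ X)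
    (hu : 0 < u) (o : ℕ) (ho : o = 1 ∨ o = 2) (hub : 4 * Q ≤ u * b' ^ o) :
    Q ≤ b' ^ 3 / (1 + b' + b' ^ 2 + b' ^ 3) * (X + u * (b' ^ 4 - b' ^ (o + 1)) / (b' - 1)) := by
  have hb1 : (0:ℝ) < b' - 1 := by linarith
  have hb0 : (0:ℝ) < b' := by linarith
  have hS : (0:ℝ) < 1 + b' + b' ^ 2 + b' ^ 3 := by positivity
  have hsq : (0:ℝ) < b' ^ 2 - 1 := by nlinarith [mul_pos hb1 (show (0:ℝ) < b' + 1 by linarith)]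
  have hbb : (0:ℝ) < b' * (b' - 1) := mul_pos hb0 hb1
  have hb2 : (1:ℝ) ≤ b' ^ 2 := by nlinarith
  have hb3 : b' ≤ b' ^ 3 := by nlinarith
  have hb4 : (1:ℝ) ≤ b' ^ 4 := by nlinarith
  have hb5 : b' ^ 2 ≤ b' ^ 5 := by nlinarith [pow_pos hb0 2]
  have hb4b : b' ≤ b' ^ 4 := by nlinarith [pow_pos hb0 2]
  have hrw : b' ^ 3 / (1 + b' + b' ^ 2 + b' ^ 3) * (X + u * (b' ^ 4 - b' ^ (o + 1)) / (b' - 1))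
      = b' ^ 3 * (X * (b' - 1) + u * (b' ^ 4 - b' ^ (o + 1))) /
        ((1 + b' + b' ^ 2 + b' ^ 3) * (b' - 1)) := by
    field_simp
    try ring
  rw [hrw, le_div_iff₀ (by positivity)]
  have t1 : Q * (b' ^ 3 * (b' - 1)) ≤ X * (b' ^ 3 * (b' - 1)) :=
    mul_le_mul_of_nonneg_right hX (by positivity)
  rcases ho with rfl | rfl
  · have t2 : 4 * Q * (b' ^ 4 * (b' ^ 2 - 1)) ≤ u * b' ^ 1 * (b' ^ 4 * (b' ^ 2 - 1)) :=
      mul_le_mul_of_nonneg_right hub (by positivity)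
    have key : (0:ℝ) ≤ (b' - 1) * (4 * b' ^ 5 + 4 * b' ^ 4 - b' ^ 2 - b' - 1) :=
      mul_nonneg hb1.le (by nlinarith)
    have t3 := mul_le_mul_of_nonneg_left key hQ.le
    ring_nf
    ring_nf at t1 t2 t3
    nlinarith [t1, t2, t3]
  · have t2 : 4 * Q * (b' ^ 4 * (b' - 1)) ≤ u * b' ^ 2 * (b' ^ 4 * (b' - 1)) :=
      mul_le_mul_of_nonneg_right hub (by positivity)
    have key : (0:ℝ) ≤ (b' - 1) * (4 * b' ^ 4 - b' ^ 2 - b' - 1) :=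
      mul_nonneg hb1.le (by nlinarith)
    have t3 := mul_le_mul_of_nonneg_left key hQ.le
    ring_nf
    ring_nf at t1 t2 t3
    nlinarith [t1, t2, t3]

/-- A family of triples `(a_j, b_j, T_j)`, `j = 1, …, L`, is 4-chained. -/
def Chained4Family (L : ℕ) (a b T : ℕ → ℝ) : Prop :=
  0 < a L ∧ 1 < b L ∧ 0 < T L ∧
    ∀ j, 1 ≤ j → j < L →
      b j = (b (j + 1)) ^ 4 ∧
      a j = ((b (j + 1)) ^ 3 / (1 + b (j + 1) + (b (j + 1)) ^ 2 + (b (j + 1)) ^ 3)) * a (j + 1) ∧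
      T j = (1 + b (j + 1) + (b (j + 1)) ^ 2 + (b (j + 1)) ^ 3) * T (j + 1)

set_option maxHeartbeats 2000000 in
/-- Corollary 3.4: for a 4-chained family of `L` Nussbaum functions and
arbitrary signs, there is a segment `m ≥ K` of the fastest function and a nontrivial
subinterval on which all `σ_j·G_j` are below `−(1/2)·a_L·T_L·b_L^{m−1} < 0`. -/
theorem chained_family_signed_common_interval (L : ℕ) (hL : 1 ≤ L) (a b T : ℕ → ℝ)
    (h : Chained4Family L a b T) (σ : ℕ → ℝ)
    (hσ : ∀ j, 1 ≤ j → j ≤ L → σ j = 1 ∨ σ j = -1) (K : ℕ) (hK : 1 ≤ K) :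
    ∃ m : ℕ, K ≤ m ∧ ∃ α β : ℝ, α < β ∧
      Set.Icc α β ⊆ Set.Icc (brk (b L) (T L) (m - 1)) (brk (b L) (T L) m) ∧
      (∀ j, 1 ≤ j → j ≤ L → ∀ χ ∈ Set.Icc α β,
        σ j * satG (a j) (b j) (T j) χ ≤ -(1 / 2) * (a L * T L * (b L) ^ (m - 1))) ∧
      -(1 / 2) * (a L * T L * (b L) ^ (m - 1)) < 0 := by
  obtain ⟨haL, hbL, hTL, hchain⟩ := h
  -- positivity at all levels
  have hpos : ∀ d j, 1 ≤ j → j + d = L → 0 < a j ∧ 1 < b j ∧ 0 < T j := by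
    intro d
    induction d with
    | zero =>
      intro j h1 h2
      have hj : j = L := by omega
      subst hj
      exact ⟨haL, hbL, hTL⟩
    | succ d ih =>
      intro j h1 h2
      obtain ⟨ha', hb', hT'⟩ := ih (j + 1) (by omega) (by omega)
      obtain ⟨hb4, ha, hT⟩ := hchain j h1 (by omega)
      have hb'0 : (0:ℝ) < b (j + 1) := by linarith
      have hS : (0:ℝ) < 1 + b (j + 1) + (b (j + 1)) ^ 2 + (b (j + 1)) ^ 3 := by positivity
      refine ⟨?_, ?_, ?_⟩
      · rw [ha]; exact mul_pos (div_pos (pow_pos hb'0 3) hS) ha'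
      · rw [hb4]; exact one_lt_pow₀ hb' (by norm_num)
      · rw [hT]; exact mul_pos hS hT'
  -- the nested segment indices
  obtain ⟨g, hg0, hgs⟩ : ∃ g : ℕ → ℕ,
      (g 0 = if σ 1 = 1 then 2 * K + 1 else 2 * K) ∧
      ∀ k, g (k + 1) = 4 * g k + if σ (k + 2) = 1 then 1 else 2 :=
    ⟨fun k => Nat.rec (if σ 1 = 1 then 2 * K + 1 else 2 * K)
      (fun k acc => 4 * acc + if σ (k + 2) = 1 then 1 else 2) k, rfl, fun _ => rfl⟩
  have hgge : ∀ k, 2 * K ≤ g k := by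
    intro k
    induction k with
    | zero => rw [hg0]; split <;> omega
    | succ k ih => rw [hgs]; omega
  have hpar : ∀ k, k + 1 ≤ L → ((-1:ℝ)) ^ (g k) = -σ (k + 1) := by
    intro k
    induction k with
    | zero =>
      intro hk
      rcases hσ 1 le_rfl hk with h1 | h1
      · rw [hg0, if_pos h1, h1]
        exact Odd.neg_one_pow ⟨K, by ring⟩
      · rw [hg0, if_neg (by rw [h1]; norm_num), h1]
        rw [Even.neg_one_pow ⟨K, by ring⟩]; norm_num
    | succ k ih =>
      intro hk
      rw [hgs]
      rcases hσ (k + 2) (by omega) (by omega) with h1 | h1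
      · rw [if_pos h1, pow_add, pow_mul]
        norm_num
        rw [show k + 1 + 1 = k + 2 from rfl, h1]
      · rw [if_neg (by rw [h1]; norm_num), pow_add, pow_mul]
        norm_num
        rw [show k + 1 + 1 = k + 2 from rfl, h1]
        norm_num
  set N := g (L - 1) with hN
  set lL := brk (b L) (T L) N with hlL
  set rL := brk (b L) (T L) (N + 1) with hrL
  have hll : rL - lL = T L * Real.pi * (b L) ^ N := brk_succ_sub hbL (T L) N
  have hbL0 : (0:ℝ) < b L := by linarith
  have hllpos : 0 < T L * Real.pi * (b L) ^ N := by positivity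
  set P := a L * T L * (b L) ^ N with hP
  have hPpos : 0 < P := by positivity
  set Q := Real.pi / 4 * P with hQ
  have hQpos : 0 < Q := by positivity
  set α := lL + 3 / 8 * (T L * Real.pi * (b L) ^ N) with hα
  set β := rL - 3 / 8 * (T L * Real.pi * (b L) ^ N) with hβ
  -- main nested claim
  have hclaim : ∀ d j, 1 ≤ j → j + d = L → ∀ χ ∈ Set.Icc α β,
      Q ≤ a j * (χ - brk (b j) (T j) (g (j - 1))) ∧
      Q ≤ a j * (brk (b j) (T j) (g (j - 1) + 1) - χ) ∧
      P ≤ a j * T j * (b j) ^ (g (j - 1)) := by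
    intro d
    induction d with
    | zero =>
      intro j h1 h2 χ hχ
      rw [show j = L from by omega]
      obtain ⟨hχ1, hχ2⟩ := hχ
      refine ⟨?_, ?_, le_rfl⟩
      · have h3 : 3 / 8 * (T L * Real.pi * (b L) ^ N) ≤ χ - lL := by
          rw [hα] at hχ1; linarith
        nlinarith [mul_le_mul_of_nonneg_left h3 haL.le,
          mul_pos haL hllpos]
      · have h3 : 3 / 8 * (T L * Real.pi * (b L) ^ N) ≤ rL - χ := by
          rw [hβ] at hχ2; linarith
        nlinarith [mul_le_mul_of_nonneg_left h3 haL.le,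
          mul_pos haL hllpos]
    | succ d ih =>
      intro j h1 h2 χ hχ
      obtain ⟨j', rfl⟩ : ∃ j', j = j' + 1 := ⟨j - 1, by omega⟩
      obtain ⟨hQl, hQr, hPa⟩ := ih (j' + 2) (by omega) (by omega) χ hχ
      have e2 : j' + 2 - 1 = j' + 1 := by omega
      rw [e2] at hQl hQr hPa
      simp only [Nat.add_sub_cancel]
      obtain ⟨hb4, haj, hTj⟩ := hchain (j' + 1) (by omega) (by omega)
      obtain ⟨ha', hb'1, hT'⟩ := hpos d (j' + 2) (by omega) (by omega)
      have hb'0 : (0:ℝ) < b (j' + 2) := by linarith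
      have hS : (0:ℝ) < 1 + b (j' + 2) + (b (j' + 2)) ^ 2 + (b (j' + 2)) ^ 3 := by positivity
      set b' := b (j' + 2)
      set a' := a (j' + 2)
      set T' := T (j' + 2)
      set p := g j' with hp
      set o := (if σ (j' + 2) = 1 then 1 else 2 : ℕ) with ho
      have hoor : o = 1 ∨ o = 2 := by rw [ho]; split <;> simp
      have ho3 : o ≤ 3 := by rcases hoor with h | h <;> omega
      have hgj : g (j' + 1) = 4 * p + o := hgs j'
      rw [hgj] at hQl hQr hPa
      have hchainbrk : ∀ n, brk (b (j' + 1)) (T (j' + 1)) n = brk b' T' (4 * n) := by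
        intro n; rw [hb4, hTj]; exact brk_chain hb'1 n
      have hu : (0:ℝ) < Real.pi * (a' * T' * b' ^ (4 * p)) := by positivity
      have hub : 4 * Q ≤ Real.pi * (a' * T' * b' ^ (4 * p)) * b' ^ o := by
        have h4 : Real.pi * (a' * T' * b' ^ (4 * p)) * b' ^ o
            = Real.pi * (a' * T' * b' ^ (4 * p + o)) := by
          rw [pow_add]; ring
        rw [h4, hQ]
        nlinarith [mul_le_mul_of_nonneg_left hPa Real.pi_pos.le]
      refine ⟨?_, ?_, ?_⟩
      · have hconc := chain_left_ineq hb'1 hQpos hQl hu o hoor hub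
        have hkey : brk b' T' (4 * p + o) - brk b' T' (4 * p)
            = T' * Real.pi * b' ^ (4 * p) * (b' ^ o - 1) / (b' - 1) := by
          rw [brk_diff hb'1, pow_add]; ring
        have heq : a (j' + 1) * (χ - brk (b (j' + 1)) (T (j' + 1)) p)
            = b' ^ 3 / (1 + b' + b' ^ 2 + b' ^ 3) *
              (a' * (χ - brk b' T' (4 * p + o)) +
                Real.pi * (a' * T' * b' ^ (4 * p)) * (b' ^ o - 1) / (b' - 1)) := by
          rw [hchainbrk p, haj]
          linear_combination (b' ^ 3 / (1 + b' + b' ^ 2 + b' ^ 3) * a') * hkey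
        rw [heq]
        exact hconc
      · have hconc := chain_right_ineq hb'1 hQpos hQr hu o hoor hub
        have hkey2 : brk b' T' (4 * (p + 1)) - brk b' T' (4 * p + o + 1)
            = T' * Real.pi * b' ^ (4 * p) * (b' ^ 4 - b' ^ (o + 1)) / (b' - 1) := by
          rw [brk_diff hb'1,
            show 4 * (p + 1) = 4 * p + 4 from by ring,
            show 4 * p + o + 1 = 4 * p + (o + 1) from by ring,
            pow_add, pow_add]
          ring
        have heq : a (j' + 1) * (brk (b (j' + 1)) (T (j' + 1)) (p + 1) - χ)
            = b' ^ 3 / (1 + b' + b' ^ 2 + b' ^ 3) *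
              (a' * (brk b' T' (4 * p + o + 1) - χ) +
                Real.pi * (a' * T' * b' ^ (4 * p)) * (b' ^ 4 - b' ^ (o + 1)) / (b' - 1)) := by
          rw [hchainbrk (p + 1), haj]
          linear_combination (b' ^ 3 / (1 + b' + b' ^ 2 + b' ^ 3) * a') * hkey2
        rw [heq]
        exact hconc
      · have hAeq : a (j' + 1) * T (j' + 1) * (b (j' + 1)) ^ p
            = a' * T' * b' ^ (4 * p + 3) := by
          rw [haj, hTj, hb4, ← pow_mul, pow_add]
          field_simp [ne_of_gt hS]
        rw [hAeq]
        have hmono : a' * T' * b' ^ (4 * p + o) ≤ a' * T' * b' ^ (4 * p + 3) :=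
          mul_le_mul_of_nonneg_left (pow_le_pow_right₀ hb'1.le (by omega)) (by positivity)
        linarith
  -- assemble the final statement
  have hKN : K ≤ N := by have := hgge (L - 1); omega
  refine ⟨N + 1, by omega, α, β, ?_, ?_, ?_, ?_⟩
  · rw [hα, hβ]; linarith
  · simp only [Nat.add_sub_cancel]
    intro x hx
    obtain ⟨hx1, hx2⟩ := hx
    rw [hα] at hx1; rw [hβ] at hx2
    exact ⟨by linarith, by linarith⟩
  · intro j hj1 hjL χ hχ
    simp only [Nat.add_sub_cancel]
    obtain ⟨hQl, hQr, hPa⟩ := hclaim (L - j) j hj1 (by omega) χ hχ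
    obtain ⟨haj, hbj, hTj⟩ := hpos (L - j) j hj1 (by omega)
    set n := g (j - 1) with hn
    set lf := brk (b j) (T j) n with hlf
    set rg := brk (b j) (T j) (n + 1) with hrg
    set c := (b j) ^ n * T j with hc
    have hbj0 : (0:ℝ) < b j := by linarith
    have hcpos : 0 < c := by positivity
    have hlen : rg - lf = T j * Real.pi * (b j) ^ n := brk_succ_sub hbj (T j) n
    have hπc : Real.pi * c = rg - lf := by rw [hlen, hc]; ring
    have hxl : lf ≤ χ := by nlinarith [lt_of_lt_of_le hQpos hQl]
    have hxr : χ ≤ rg := by nlinarith [lt_of_lt_of_le hQpos hQr]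
    have hG := satG_formula (a := a j) hbj hTj n hxl hxr
    set θ := (χ - lf) / ((b j) ^ n * T j) with hθ
    have hθ0 : 0 ≤ θ := div_nonneg (by linarith) hcpos.le
    have hθπ : θ ≤ Real.pi := by
      rw [hθ, div_le_iff₀ hcpos]
      nlinarith [hπc]
    have hsin : P / 2 ≤ a j * c * Real.sin θ := by
      have hcne : c ≠ 0 := ne_of_gt hcpos
      rcases le_total θ (Real.pi / 2) with hcase | hcase
      · have hjord := Real.mul_le_sin hθ0 hcase
        have h2 : a j * c * (2 / Real.pi * θ) = 2 / Real.pi * (a j * (χ - lf)) := by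
          rw [hθ, hc]
          field_simp
        have h3 : a j * c * (2 / Real.pi * θ) ≤ a j * c * Real.sin θ :=
          mul_le_mul_of_nonneg_left hjord (by positivity)
        have h4 : 2 / Real.pi * Q ≤ 2 / Real.pi * (a j * (χ - lf)) := by
          have : (0:ℝ) ≤ 2 / Real.pi := by positivity
          exact mul_le_mul_of_nonneg_left hQl this
        have h5 : 2 / Real.pi * Q = P / 2 := by
          rw [hQ]
          field_simp
          ring
        linarith
      · have hjord := Real.mul_le_sin (x := Real.pi - θ) (by linarith) (by linarith)
        rw [Real.sin_pi_sub] at hjord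
        have hπc' : Real.pi * ((b j) ^ n * T j) = rg - lf := by rw [← hc]; exact hπc
        have h2 : a j * c * (2 / Real.pi * (Real.pi - θ)) = 2 / Real.pi * (a j * (rg - χ)) := by
          rw [hθ, hc]
          field_simp
          rw [show rg = Real.pi * ((b j) ^ n * T j) + lf by linarith [hπc']]; ring
        have h3 : a j * c * (2 / Real.pi * (Real.pi - θ)) ≤ a j * c * Real.sin θ :=
          mul_le_mul_of_nonneg_left hjord (by positivity)
        have h4 : 2 / Real.pi * Q ≤ 2 / Real.pi * (a j * (rg - χ)) := by
          have : (0:ℝ) ≤ 2 / Real.pi := by positivity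
          exact mul_le_mul_of_nonneg_left hQr this
        have h5 : 2 / Real.pi * Q = P / 2 := by
          rw [hQ]
          field_simp
          ring
        linarith
    have hparj : ((-1:ℝ)) ^ n = -σ j := by
      have := hpar (j - 1) (by omega)
      rwa [show j - 1 + 1 = j from by omega] at this
    have hfin : σ j * satG (a j) (b j) (T j) χ = -(a j * c * Real.sin θ) := by
      rcases hσ j hj1 hjL with hs | hs <;> rw [hG, hparj, hs, hc] <;> ring
    rw [hfin]
    have : -(1 / 2) * (a L * T L * (b L) ^ N) = -(P / 2) := by rw [hP]; ring
    rw [this]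
    linarith
  · simp only [Nat.add_sub_cancel]
    nlinarith [hPpos]
end

section
/- (Barbalat's Lemma) Let f : [0, ∞) → ℝ be uniformly continuous, and suppose that the limit lim_{t→∞} ∫_0^t f(s) ds exists and is finite. Then lim_{t→∞} f(t) = 0. -/
open Real Filter Set

/-- Barbalat's Lemma: if `f : [0,∞) → ℝ` is uniformly continuous and
`∫_0^t f` has a finite limit as `t → ∞`, then `f(t) → 0`. -/
theorem barbalat (f : ℝ → ℝ) (hf : UniformContinuousOn f (Set.Ici 0))
    (l : ℝ)
    (hl : Filter.Tendsto (fun t => ∫ s in (0:ℝ)..t, f s) Filter.atTop (nhds l)) :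
    Filter.Tendsto f Filter.atTop (nhds 0) := by
  have hc : ContinuousOn f (Set.Ici 0) := hf.continuousOn
  by_contra hcon
  rw [Metric.tendsto_atTop] at hcon
  push_neg at hcon
  obtain ⟨ε, hε, hbad⟩ := hcon
  obtain ⟨δ, hδ, hunif⟩ := Metric.uniformContinuousOn_iff.mp hf (ε/2) (by linarith)
  set d : ℝ := δ / 2 with hd
  have hdpos : 0 < d := by positivity
  -- Cauchy criterion from convergence of the integral
  have h1 : Tendsto (fun t => (∫ s in (0:ℝ)..(t + d), f s) - ∫ s in (0:ℝ)..t, f s)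
      atTop (nhds 0) := by
    have h2 : Tendsto (fun t : ℝ => t + d) atTop atTop :=
      tendsto_atTop_add_const_right atTop d tendsto_id
    have := (hl.comp h2).sub hl
    simpa using this
  have h3 : ∀ᶠ t in atTop,
      |(∫ s in (0:ℝ)..(t + d), f s) - ∫ s in (0:ℝ)..t, f s| < ε * d / 4 := by
    have := Metric.tendsto_nhds.mp h1 (ε * d / 4) (by positivity)
    filter_upwards [this] with t ht
    simpa [Real.dist_eq] using ht
  obtain ⟨N, hN⟩ := eventually_atTop.mp h3
  obtain ⟨t, ht, htf⟩ := hbad (max N 0)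
  have htN : N ≤ t := le_trans (le_max_left _ _) ht
  have ht0 : (0:ℝ) ≤ t := le_trans (le_max_right _ _) ht
  have htf' : ε ≤ |f t| := by simpa [Real.dist_eq] using htf
  -- integrability
  have hsub : Set.Icc t (t + d) ⊆ Set.Ici 0 := fun x hx => le_trans ht0 hx.1
  have hint : IntervalIntegrable f MeasureTheory.volume t (t + d) :=
    ((hc.mono hsub).intervalIntegrable_of_Icc (by linarith))
  have hint0t : IntervalIntegrable f MeasureTheory.volume 0 t :=
    ((hc.mono (by intro x hx; exact hx.1)).intervalIntegrable_of_Icc ht0)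
  have hsplit : (∫ s in (0:ℝ)..(t + d), f s) - (∫ s in (0:ℝ)..t, f s)
      = ∫ s in t..(t + d), f s := by
    rw [← intervalIntegral.integral_add_adjacent_intervals hint0t hint]
    ring
  have hsmall : |∫ s in t..(t + d), f s| < ε * d / 4 := by
    rw [← hsplit]; exact hN t htN
  -- near t, f is close to f t
  have hclose : ∀ s ∈ Set.Icc t (t + d), |f s - f t| < ε / 2 := by
    intro s hs
    have hs0 : s ∈ Set.Ici (0:ℝ) := hsub hs
    have hdist : dist s t < δ := by
      rw [Real.dist_eq]
      rw [abs_of_nonneg (by linarith [hs.1])]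
      have := hs.2
      simp only [hd] at this ⊢
      linarith
    have := hunif s hs0 t (by exact ht0) hdist
    simpa [Real.dist_eq] using this
  have hconst : IntervalIntegrable (fun _ : ℝ => ε / 2) MeasureTheory.volume t (t + d) :=
    intervalIntegrable_const
  have hconst' : IntervalIntegrable (fun _ : ℝ => -(ε / 2)) MeasureTheory.volume t (t + d) :=
    intervalIntegrable_const
  rcases abs_cases (f t) with ⟨habs, hsign⟩ | ⟨habs, hsign⟩
  · -- f t ≥ ε > 0
    have hft : ε ≤ f t := by rw [habs] at htf'; exact htf'
    have hlow : ∀ s ∈ Set.Icc t (t + d), ε / 2 ≤ f s := by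
      intro s hs
      have := hclose s hs
      have := abs_lt.mp this
      linarith [this.1]
    have hge : ε * d / 2 ≤ ∫ s in t..(t + d), f s := by
      have := intervalIntegral.integral_mono_on (by linarith : t ≤ t + d) hconst hint hlow
      simpa [mul_comm] using this
    have : ε * d / 2 ≤ |∫ s in t..(t + d), f s| := le_trans hge (le_abs_self _)
    nlinarith
  · -- f t ≤ -ε
    have hft : f t ≤ -ε := by rw [habs] at htf'; linarith
    have hhigh : ∀ s ∈ Set.Icc t (t + d), f s ≤ -(ε / 2) := by
      intro s hs
      have := abs_lt.mp (hclose s hs)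
      linarith [this.2]
    have hle : (∫ s in t..(t + d), f s) ≤ -(ε * d / 2) := by
      have := intervalIntegral.integral_mono_on (by linarith : t ≤ t + d) hint hconst' hhigh
      simpa [mul_comm] using this
    have h := neg_le_abs (∫ s in t..(t + d), f s)
    nlinarith
end
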